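/- Let G be a simple graph on a finite vertex set V and fix a destination k ∈ V. Define x : ℕ → V → Bool by x 0 i = true iff i = k, and x (t+1) i = the Boolean OR of x t j over all j in {i} ∪ N(i). Define d : ℕ → V → ℕ∞ by d 0 i = 0 if i = k and ⊤ otherwise, and d (t+1) i = d t i if x (t+1) i = x t i, and d (t+1) i = 1 + (the infimum of d t j over j ∈ N(i)) if x (t+1) i ≠ x t i. Then for every t ∈ ℕ and every i ∈ V: if i is reachable from k in G and G.dist i k ≤ t then d t i = G.dist i k (as an element of ℕ∞), and otherwise d t i = ⊤. -/

import Mathlib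

open SimpleGraph

lemma aux_adj_dist_le {V : Type*} (G : SimpleGraph V) {i j k : V}
    (h : G.Adj i j) (hr : G.Reachable j k) : G.dist i k ≤ G.dist j k + 1 := by
  obtain ⟨p, hp⟩ := hr.exists_walk_length_eq_dist
  have := G.dist_le (p.cons h)
  simpa [SimpleGraph.Walk.length_cons, hp] using this

lemma aux_exists {V : Type*} (G : SimpleGraph V) {i k : V}
    (hr : G.Reachable i k) (hpos : 0 < G.dist i k) :
    ∃ j, G.Adj i j ∧ G.Reachable j k ∧ G.dist j k + 1 = G.dist i k := by
  obtain ⟨p, hp⟩ := hr.exists_walk_length_eq_dist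
  cases p with
  | nil => simp at hp; simp at hpos
  | @cons _ j _ h q =>
    refine ⟨j, h, ⟨q⟩, ?_⟩
    have h1 : G.dist j k ≤ q.length := G.dist_le q
    have h2 : G.dist i k ≤ G.dist j k + 1 := aux_adj_dist_le G h ⟨q⟩
    simp [SimpleGraph.Walk.length_cons] at hp
    omega

lemma bool_sup_eq_true {α : Type*} (s : Finset α) (f : α → Bool) :
    s.sup f = true ↔ ∃ a ∈ s, f a = true := by
  constructor
  · intro h
    by_contra hc
    push_neg at hc
    have : s.sup f = ⊥ := (Finset.sup_eq_bot_iff f s).mpr (by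
      intro a ha; simpa using hc a ha)
    simp [this] at h
  · rintro ⟨a, ha, hfa⟩
    have := Finset.le_sup (f := f) ha
    rw [hfa] at this
    exact le_antisymm (by simp) this

theorem distance_estimation_protocol {V : Type*} [Fintype V] [DecidableEq V]
    (G : SimpleGraph V) [DecidableRel G.Adj] (k : V)
    (x : ℕ → V → Bool) (d : ℕ → V → ℕ∞)
    (hx0 : ∀ i : V, x 0 i = if i = k then true else false)
    (hxstep : ∀ (t : ℕ) (i : V),
      x (t + 1) i = (insert i (G.neighborFinset i)).sup (x t))
    (hd0 : ∀ i : V, d 0 i = if i = k then 0 else ⊤)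
    (hdstep : ∀ (t : ℕ) (i : V),
      d (t + 1) i =
        if x (t + 1) i = x t i then d t i
        else 1 + (G.neighborFinset i).inf (d t)) :
    ∀ (t : ℕ) (i : V),
      (G.Reachable i k ∧ G.dist i k ≤ t → d t i = (G.dist i k : ℕ∞)) ∧
      (¬ (G.Reachable i k ∧ G.dist i k ≤ t) → d t i = ⊤) := by
  -- characterization of x
  have hxchar : ∀ t i, x t i = true ↔ (G.Reachable i k ∧ G.dist i k ≤ t) := by
    intro t
    induction t with
    | zero =>
      intro i
      rw [hx0]
      constructor
      · intro h
        by_cases hik : i = k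
        · subst hik; exact ⟨Reachable.refl _, by simp⟩
        · simp [hik] at h
      · rintro ⟨hr, hle⟩
        have : G.dist i k = 0 := Nat.le_zero.mp hle
        have : i = k := (hr.dist_eq_zero_iff).mp this
        simp [this]
    | succ t ih =>
      intro i
      rw [hxstep, bool_sup_eq_true]
      constructor
      · rintro ⟨j, hj, hxj⟩
        obtain ⟨hr, hle⟩ := (ih j).mp hxj
        rcases Finset.mem_insert.mp hj with rfl | hj
        · exact ⟨hr, le_trans hle (Nat.le_succ _)⟩
        · have hadj : G.Adj i j := by simpa using hj
          exact ⟨(hadj.reachable).trans hr,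
            le_trans (aux_adj_dist_le G hadj hr) (by omega)⟩
      · rintro ⟨hr, hle⟩
        by_cases h : G.dist i k ≤ t
        · exact ⟨i, Finset.mem_insert_self _ _, (ih i).mpr ⟨hr, h⟩⟩
        · have hpos : 0 < G.dist i k := by omega
          obtain ⟨j, hadj, hrj, hdj⟩ := aux_exists G hr hpos
          refine ⟨j, Finset.mem_insert_of_mem (by simpa using hadj),
            (ih j).mpr ⟨hrj, by omega⟩⟩
  intro t
  induction t with
  | zero =>
    intro i
    constructor
    · rintro ⟨hr, hle⟩
      have hd : G.dist i k = 0 := Nat.le_zero.mp hle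
      have hik : i = k := (hr.dist_eq_zero_iff).mp hd
      rw [hd0, hd]; simp [hik]
    · intro hn
      have hik : i ≠ k := by
        rintro rfl
        exact hn ⟨Reachable.refl _, by simp⟩
      rw [hd0]; simp [hik]
  | succ t ih =>
    intro i
    by_cases hx : x (t + 1) i = x t i
    · have hiff : (G.Reachable i k ∧ G.dist i k ≤ t + 1) ↔
          (G.Reachable i k ∧ G.dist i k ≤ t) := by
        rw [← hxchar, ← hxchar, hx]
      constructor
      · intro h
        rw [hdstep, if_pos hx]
        exact (ih i).1 (hiff.mp h)
      · intro h
        rw [hdstep, if_pos hx]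
        exact (ih i).2 (fun hc => h (hiff.mpr hc))
    · -- x flipped: x t i = false, x (t+1) i = true
      have hxt : x t i = false := by
        cases h : x t i with
        | false => rfl
        | true =>
          exfalso
          apply hx
          rw [h, hxstep, bool_sup_eq_true]
          exact ⟨i, Finset.mem_insert_self _ _, h⟩
      have hxt1 : x (t + 1) i = true := by
        cases h : x (t + 1) i with
        | false => exact absurd (h.trans hxt.symm) hx
        | true => rfl
      obtain ⟨hr, hle1⟩ := (hxchar (t + 1) i).mp hxt1
      have hnle : ¬ G.dist i k ≤ t := by
        intro hc
        rw [(hxchar t i).mpr ⟨hr, hc⟩] at hxt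
        exact Bool.noConfusion hxt
      have hdist : G.dist i k = t + 1 := by omega
      have hinf : (G.neighborFinset i).inf (d t) = (t : ℕ∞) := by
        apply le_antisymm
        · obtain ⟨j, hadj, hrj, hdj⟩ := aux_exists G hr (by omega)
          have hjle : G.dist j k ≤ t := by omega
          have := (ih j).1 ⟨hrj, hjle⟩
          have hmem : j ∈ G.neighborFinset i := by simpa using hadj
          calc (G.neighborFinset i).inf (d t) ≤ d t j := Finset.inf_le hmem
            _ = (G.dist j k : ℕ∞) := this
            _ ≤ (t : ℕ∞) := by exact_mod_cast hjle
        · apply Finset.le_inf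
          intro j hj
          have hadj : G.Adj i j := by simpa using hj
          by_cases hc : G.Reachable j k ∧ G.dist j k ≤ t
          · rw [(ih j).1 hc]
            have : G.dist i k ≤ G.dist j k + 1 := aux_adj_dist_le G hadj hc.1
            have : t ≤ G.dist j k := by omega
            exact_mod_cast this
          · rw [(ih j).2 hc]; exact le_top
      constructor
      · intro _
        rw [hdstep, if_neg hx, hinf, hdist]
        push_cast
        ring
      · intro hn
        exact absurd ⟨hr, hle1⟩ hn
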